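/- arXiv:1903.06446 — 2 statements merged into one kernel-verified Lean document; each statement's English description precedes it below -/
import Mathlib

section
/- For H ∈ L²(ℝ), the function σ(τ₁,τ₂) = σ(|τ₁−τ₂|), with σ(τ)² = ∫ |H*(λ)|² sin²(τλ/2) dλ, is a pseudometric on ℝ; moreover, if H*(λ) ≠ 0 on a set of positive Lebesgue measure, then σ is a metric. -/
open MeasureTheory Real

private lemma sqrt_integral_sq_eq_norm_toLp {G : ℝ → ℝ}
    (hG : MemLp G 2 (volume : Measure ℝ)) :
    Real.sqrt (∫ l, G l ^ 2) = ‖hG.toLp G‖ := by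
  have h1 : ‖hG.toLp G‖ ^ 2 = ∫ a, (hG.toLp G) a * (hG.toLp G) a := by
    rw [← real_inner_self_eq_norm_sq, L2.inner_def]
    simp [RCLike.inner_apply, sq]
  have h2 : ∫ a, (hG.toLp G) a * (hG.toLp G) a = ∫ l, G l ^ 2 := by
    refine integral_congr_ae ?_
    filter_upwards [hG.coeFn_toLp] with x hx
    rw [hx]; ring
  rw [← h2, ← h1, Real.sqrt_sq (norm_nonneg _)]

private lemma sin_zero_set_null {d : ℝ} (hd : d ≠ 0) :
    (volume : Measure ℝ) {l : ℝ | Real.sin (d * l / 2) = 0} = 0 := by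
  refine measure_mono_null ?_
    ((Set.countable_range (fun n : ℤ => 2 * (n : ℝ) * π / d)).measure_zero _)
  intro l hl
  obtain ⟨n, hn⟩ := Real.sin_eq_zero_iff.mp hl
  exact ⟨n, by field_simp; linarith⟩

/-- σ(τ₁,τ₂) = σ(|τ₁−τ₂|), with σ(τ)² = ∫ |H*(λ)|² sin²(τλ/2) dλ,
is a pseudometric on ℝ; if moreover H* ≠ 0 on a set of positive Lebesgue
measure, then σ is a metric. -/
theorem sigma_pseudometric
    (H : ℝ → ℝ) (Hstar : ℝ → ℂ)
    (hH : MemLp H 2 (volume : Measure ℝ))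
    (hHstar : MemLp Hstar 2 (volume : Measure ℝ))
    (σ : ℝ → ℝ → ℝ)
    (hσ : ∀ τ₁ τ₂ : ℝ, σ τ₁ τ₂ =
      Real.sqrt (∫ l : ℝ, ‖Hstar l‖ ^ 2 * Real.sin (|τ₁ - τ₂| * l / 2) ^ 2)) :
    (∀ τ : ℝ, σ τ τ = 0) ∧
    (∀ τ₁ τ₂ : ℝ, 0 ≤ σ τ₁ τ₂) ∧
    (∀ τ₁ τ₂ : ℝ, σ τ₁ τ₂ = σ τ₂ τ₁) ∧
    (∀ τ₁ τ₂ τ₃ : ℝ, σ τ₁ τ₃ ≤ σ τ₁ τ₂ + σ τ₂ τ₃) ∧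
    (0 < volume {l : ℝ | Hstar l ≠ 0} →
      ∀ τ₁ τ₂ : ℝ, σ τ₁ τ₂ = 0 → τ₁ = τ₂) := by
  set G : ℝ → ℝ → ℝ := fun t l => ‖Hstar l‖ * |Real.sin (t * l / 2)| with hGdef
  have hGnonneg : ∀ t l, 0 ≤ G t l := fun t l =>
    mul_nonneg (norm_nonneg _) (abs_nonneg _)
  have hG : ∀ t, MemLp (G t) 2 (volume : Measure ℝ) := by
    intro t
    refine hHstar.norm.of_le ?_ ?_
    · exact hHstar.1.norm.mul
        (Continuous.aestronglyMeasurable (by continuity))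
    · filter_upwards with l
      rw [Real.norm_eq_abs, Real.norm_eq_abs, abs_norm, abs_of_nonneg (hGnonneg t l)]
      exact mul_le_of_le_one_right (norm_nonneg _) (Real.abs_sin_le_one _)
  have hσ' : ∀ τ₁ τ₂ : ℝ, σ τ₁ τ₂ = Real.sqrt (∫ l, G (τ₁ - τ₂) l ^ 2) := by
    intro τ₁ τ₂
    rw [hσ]
    congr 1
    refine integral_congr_ae (Filter.Eventually.of_forall fun l => ?_)
    have habs : Real.sin (|τ₁ - τ₂| * l / 2) ^ 2 = Real.sin ((τ₁ - τ₂) * l / 2) ^ 2 := by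
      rcases abs_cases (τ₁ - τ₂) with ⟨h, _⟩ | ⟨h, _⟩
      · rw [h]
      · rw [h]
        have : -(τ₁ - τ₂) * l / 2 = -((τ₁ - τ₂) * l / 2) := by ring
        rw [this, Real.sin_neg, neg_pow]
        ring
    simp only [G, mul_pow, sq_abs, habs]
  have hnormeq : ∀ t, Real.sqrt (∫ l, G t l ^ 2) = ‖(hG t).toLp (G t)‖ :=
    fun t => sqrt_integral_sq_eq_norm_toLp (hG t)
  refine ⟨?_, ?_, ?_, ?_, ?_⟩
  · intro τ
    rw [hσ']
    have : ∀ l, G (τ - τ) l ^ 2 = 0 := by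
      intro l; simp [G]
    simp only [this, integral_zero, Real.sqrt_zero]
  · intro τ₁ τ₂; rw [hσ]; exact Real.sqrt_nonneg _
  · intro τ₁ τ₂; rw [hσ, hσ, abs_sub_comm]
  · intro τ₁ τ₂ τ₃
    rw [hσ' τ₁ τ₃, hσ' τ₁ τ₂, hσ' τ₂ τ₃]
    set a := τ₁ - τ₂
    set b := τ₂ - τ₃
    have hab : τ₁ - τ₃ = a + b := by ring
    rw [hab]
    have hkey : ∀ l, G (a + b) l ≤ G a l + G b l := by
      intro l
      simp only [G]
      have : (a + b) * l / 2 = a * l / 2 + b * l / 2 := by ring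
      rw [this, Real.sin_add]
      calc ‖Hstar l‖ * |Real.sin (a*l/2) * Real.cos (b*l/2) +
              Real.cos (a*l/2) * Real.sin (b*l/2)|
          ≤ ‖Hstar l‖ * (|Real.sin (a*l/2)| + |Real.sin (b*l/2)|) := by
            refine mul_le_mul_of_nonneg_left ?_ (norm_nonneg _)
            calc |Real.sin (a*l/2) * Real.cos (b*l/2) +
                    Real.cos (a*l/2) * Real.sin (b*l/2)|
                ≤ |Real.sin (a*l/2) * Real.cos (b*l/2)| +
                    |Real.cos (a*l/2) * Real.sin (b*l/2)| := abs_add_le _ _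
              _ ≤ |Real.sin (a*l/2)| + |Real.sin (b*l/2)| := by
                  rw [abs_mul, abs_mul]
                  gcongr
                  · exact mul_le_of_le_one_right (abs_nonneg _) (Real.abs_cos_le_one _)
                  · exact mul_le_of_le_one_left (abs_nonneg _) (Real.abs_cos_le_one _)
        _ = ‖Hstar l‖ * |Real.sin (a*l/2)| + ‖Hstar l‖ * |Real.sin (b*l/2)| := by ring
    have hsum : MemLp (G a + G b) 2 (volume : Measure ℝ) := (hG a).add (hG b)
    have hstep : (∫ l, G (a + b) l ^ 2) ≤ ∫ l, (G a + G b) l ^ 2 := by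
      refine integral_mono (hG (a+b)).integrable_sq hsum.integrable_sq fun l => ?_
      have h1 : G (a+b) l ≤ (G a + G b) l := hkey l
      exact pow_le_pow_left₀ (hGnonneg _ _) h1 2
    calc Real.sqrt (∫ l, G (a + b) l ^ 2)
        ≤ Real.sqrt (∫ l, (G a + G b) l ^ 2) := Real.sqrt_le_sqrt hstep
      _ = ‖hsum.toLp (G a + G b)‖ := sqrt_integral_sq_eq_norm_toLp hsum
      _ = ‖(hG a).toLp (G a) + (hG b).toLp (G b)‖ := by congr 1
      _ ≤ ‖(hG a).toLp (G a)‖ + ‖(hG b).toLp (G b)‖ := norm_add_le _ _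
      _ = Real.sqrt (∫ l, G a l ^ 2) + Real.sqrt (∫ l, G b l ^ 2) := by
          rw [hnormeq, hnormeq]
  · intro hpos τ₁ τ₂ hzero
    by_contra hne
    have hd : τ₁ - τ₂ ≠ 0 := sub_ne_zero.mpr hne
    rw [hσ'] at hzero
    have hint0 : (∫ l, G (τ₁ - τ₂) l ^ 2) = 0 := by
      have hle := Real.sqrt_eq_zero'.mp hzero
      have hge : 0 ≤ ∫ l, G (τ₁ - τ₂) l ^ 2 :=
        integral_nonneg fun l => sq_nonneg _
      linarith
    have hae : ∀ᵐ l : ℝ, G (τ₁ - τ₂) l ^ 2 = 0 := by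
      have := (integral_eq_zero_iff_of_nonneg (fun l => sq_nonneg _)
        (hG (τ₁ - τ₂)).integrable_sq).mp hint0
      filter_upwards [this] with l hl using hl
    have hsin : ∀ᵐ l : ℝ, Real.sin ((τ₁ - τ₂) * l / 2) ≠ 0 := by
      have := sin_zero_set_null hd
      rw [ae_iff]
      simpa using this
    have hHzero : ∀ᵐ l : ℝ, Hstar l = 0 := by
      filter_upwards [hae, hsin] with l h1 h2
      have : G (τ₁ - τ₂) l = 0 := by
        have := sq_eq_zero_iff.mp h1
        exact this
      simp only [G, mul_eq_zero, abs_eq_zero, norm_eq_zero] at this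
      tauto
    have : volume {l : ℝ | Hstar l ≠ 0} = 0 := by
      rw [ae_iff] at hHzero
      simpa using hHzero
    rw [this] at hpos
    exact lt_irrefl 0 hpos
end

section
/- Let Z be a zero-mean Gaussian process with covariance C_∞(τ₁,τ₂) = (1/2π)∫ [e^{i(τ₁−τ₂)λ}|H*(λ)|² + e^{i(τ₁+τ₂)λ}(H*(λ))²] dλ, H ∈ L²(ℝ). Then d_Z(τ₁,τ₂)² := C_∞(τ₁,τ₁) − 2C_∞(τ₁,τ₂) + C_∞(τ₂,τ₂) ≤ (4/π)∫ |H*(λ)|² sin²((τ₂−τ₁)λ/2) dλ for all τ₁, τ₂ ∈ ℝ. -/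
open MeasureTheory

set_option maxHeartbeats 1000000 in
/-- The canonical pseudometric of the limiting Gaussian process Z,
d_Z(τ₁,τ₂)² = C_∞(τ₁,τ₁) − 2C_∞(τ₁,τ₂) + C_∞(τ₂,τ₂), is bounded by
(4/π)∫ |H*(λ)|² sin²((τ₂−τ₁)λ/2) dλ. -/
theorem dZ_le_sigma
    (H : ℝ → ℝ) (Hstar : ℝ → ℂ)
    (hH : MemLp H 2 (volume : Measure ℝ))
    (hHstar : MemLp Hstar 2 (volume : Measure ℝ))
    (hconj : ∀ l : ℝ, Hstar (-l) = starRingEnd ℂ (Hstar l))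
    (Cinf : ℝ → ℝ → ℝ)
    (hC : ∀ τ₁ τ₂ : ℝ, Cinf τ₁ τ₂ =
      (1 / (2 * Real.pi)) *
        (∫ l : ℝ, Complex.exp (Complex.I * (τ₁ - τ₂) * l) * (‖Hstar l‖ ^ 2 : ℂ) +
          Complex.exp (Complex.I * (τ₁ + τ₂) * l) * (Hstar l) ^ 2).re) :
    ∀ τ₁ τ₂ : ℝ,
      Cinf τ₁ τ₁ - 2 * Cinf τ₁ τ₂ + Cinf τ₂ τ₂ ≤
        (4 / Real.pi) *
          ∫ l : ℝ, ‖Hstar l‖ ^ 2 * Real.sin ((τ₂ - τ₁) * l / 2) ^ 2 := by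
  intro τ₁ τ₂
  have hπ : (0:ℝ) < Real.pi := Real.pi_pos
  -- integrability of |Hstar|^2
  have hfm : AEStronglyMeasurable (fun l => ‖Hstar l‖ ^ 2) (volume : Measure ℝ) := by
    have := hHstar.aestronglyMeasurable.norm.pow 2
    exact this
  have hfint : Integrable (fun l => ‖Hstar l‖ ^ 2) (volume : Measure ℝ) := by
    have h := hHstar.integrable_norm_rpow two_ne_zero ENNReal.ofNat_ne_top
    refine h.congr (Filter.Eventually.of_forall fun l => ?_)
    show ‖Hstar l‖ ^ ((2:ENNReal).toReal) = ‖Hstar l‖ ^ (2:ℕ)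
    rw [show ((2:ENNReal).toReal) = ((2:ℕ):ℝ) by norm_num, Real.rpow_natCast]
  have hgm : AEStronglyMeasurable (fun l => (Hstar l) ^ 2) (volume : Measure ℝ) := by
    have := hHstar.aestronglyMeasurable.pow 2
    exact this
  have hgint : Integrable (fun l => (Hstar l) ^ 2) (volume : Measure ℝ) :=
    hfint.mono' hgm (ae_of_all _ fun l => by simp [norm_pow])
  -- multiplication by a unimodular exponential preserves integrability
  have hmulint : ∀ c : ℂ, c.im = 0 → ∀ u : ℝ → ℂ, Integrable u (volume : Measure ℝ) →
      Integrable (fun l : ℝ => Complex.exp (Complex.I * c * l) * u l) (volume : Measure ℝ) := by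
    intro c hc u hu
    refine hu.bdd_mul (c := 1) ?_ (ae_of_all _ fun l => ?_)
    · exact (Complex.continuous_exp.comp (by continuity)).aestronglyMeasurable
    · rw [Complex.norm_exp]
      simp [Complex.mul_re, hc]
  have hG : ∀ σ₁ σ₂ : ℝ, Integrable
      (fun l : ℝ => Complex.exp (Complex.I * (σ₁ - σ₂) * l) * ((‖Hstar l‖ : ℂ) ^ 2) +
        Complex.exp (Complex.I * (σ₁ + σ₂) * l) * (Hstar l) ^ 2) (volume : Measure ℝ) := by
    intro σ₁ σ₂
    refine Integrable.add ?_ ?_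
    · have h1 := hmulint ((σ₁:ℂ) - σ₂) (by simp) _ hfint.ofReal
      refine h1.congr (ae_of_all _ fun l => ?_)
      norm_cast
    · exact hmulint ((σ₁:ℂ) + σ₂) (by simp) _ hgint
  set G : ℝ → ℝ → ℝ → ℂ := fun σ₁ σ₂ l =>
    Complex.exp (Complex.I * (σ₁ - σ₂) * l) * ((‖Hstar l‖ : ℂ) ^ 2) +
      Complex.exp (Complex.I * (σ₁ + σ₂) * l) * (Hstar l) ^ 2 with hGdef
  have h1 := hG τ₁ τ₁
  have h2 := hG τ₁ τ₂
  have h3 := hG τ₂ τ₂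
  have hsub : Integrable (fun l => G τ₁ τ₁ l - 2 * G τ₁ τ₂ l) (volume : Measure ℝ) :=
    h1.sub (h2.const_mul 2)
  have hcomb : Integrable (fun l => G τ₁ τ₁ l - 2 * G τ₁ τ₂ l + G τ₂ τ₂ l)
      (volume : Measure ℝ) := hsub.add h3
  have hsplit : ∫ l, (G τ₁ τ₁ l - 2 * G τ₁ τ₂ l + G τ₂ τ₂ l) =
      (∫ l, G τ₁ τ₁ l) - (2 * ∫ l, G τ₁ τ₂ l) + ∫ l, G τ₂ τ₂ l := by
    rw [integral_add hsub h3, integral_sub h1 (h2.const_mul 2), integral_const_mul]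
  -- pointwise bound on the real part
  have hpt : ∀ l : ℝ, (G τ₁ τ₁ l - 2 * G τ₁ τ₂ l + G τ₂ τ₂ l).re ≤
      8 * (‖Hstar l‖ ^ 2 * Real.sin ((τ₂ - τ₁) * l / 2) ^ 2) := by
    intro l
    set a : ℂ := Complex.exp (Complex.I * τ₁ * l) with ha
    set b : ℂ := Complex.exp (Complex.I * τ₂ * l) with hb
    have hexp_add : ∀ c d : ℝ, Complex.exp (Complex.I * ((c:ℂ) + d) * l) =
        Complex.exp (Complex.I * c * l) * Complex.exp (Complex.I * d * l) := by
      intro c d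
      rw [← Complex.exp_add]
      congr 1
      ring
    have hA : G τ₁ τ₁ l - 2 * G τ₁ τ₂ l + G τ₂ τ₂ l =
        (2 - 2 * Complex.exp (Complex.I * ((τ₁:ℂ) - τ₂) * l)) * ((‖Hstar l‖ : ℂ) ^ 2) +
          (a - b) ^ 2 * (Hstar l) ^ 2 := by
      rw [hGdef]
      simp only
      rw [hexp_add τ₁ τ₁, hexp_add τ₁ τ₂, hexp_add τ₂ τ₂, ← ha, ← hb,
        show ((τ₁:ℂ) - τ₁) = 0 by ring, show ((τ₂:ℂ) - τ₂) = 0 by ring]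
      simp only [mul_zero, zero_mul, Complex.exp_zero]
      ring
    have hEre : (Complex.exp (Complex.I * ((τ₁:ℂ) - τ₂) * l)).re =
        Real.cos ((τ₁ - τ₂) * l) := by
      rw [show Complex.I * ((τ₁:ℂ) - τ₂) * l = (((τ₁ - τ₂) * l : ℝ) : ℂ) * Complex.I by
        push_cast; ring]
      exact Complex.exp_ofReal_mul_I_re _
    have hab : ‖a - b‖ ^ 2 = 2 - 2 * Real.cos ((τ₁ - τ₂) * l) := by
      have ha' : a = Complex.exp (((τ₁ * l : ℝ) : ℂ) * Complex.I) := by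
        rw [ha]; congr 1; push_cast; ring
      have hb' : b = Complex.exp (((τ₂ * l : ℝ) : ℂ) * Complex.I) := by
        rw [hb]; congr 1; push_cast; ring
      rw [ha', hb', Complex.exp_mul_I, Complex.exp_mul_I]
      rw [Complex.sq_norm, Complex.normSq_apply]
      simp only [Complex.add_re, Complex.add_im, Complex.sub_re, Complex.sub_im,
        Complex.mul_re, Complex.mul_im, Complex.I_re, Complex.I_im,
        ← Complex.ofReal_cos, ← Complex.ofReal_sin, Complex.ofReal_re, Complex.ofReal_im]
      have hc : Real.cos ((τ₁ - τ₂) * l) =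
          Real.cos (τ₁ * l) * Real.cos (τ₂ * l) + Real.sin (τ₁ * l) * Real.sin (τ₂ * l) := by
        rw [show (τ₁ - τ₂) * l = τ₁ * l - τ₂ * l by ring, Real.cos_sub]
      nlinarith [hc, Real.sin_sq_add_cos_sq (τ₁ * l), Real.sin_sq_add_cos_sq (τ₂ * l)]
    have hsin : 2 - 2 * Real.cos ((τ₁ - τ₂) * l) =
        4 * Real.sin ((τ₂ - τ₁) * l / 2) ^ 2 := by
      rw [Real.sin_sq_eq_half_sub, show 2 * ((τ₂ - τ₁) * l / 2) = -((τ₁ - τ₂) * l) by ring,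
        Real.cos_neg]
      ring
    have hfnn : (0:ℝ) ≤ ‖Hstar l‖ ^ 2 := by positivity
    have hre2 : ((a - b) ^ 2 * (Hstar l) ^ 2).re ≤
        (2 - 2 * Real.cos ((τ₁ - τ₂) * l)) * ‖Hstar l‖ ^ 2 := by
      calc ((a - b) ^ 2 * (Hstar l) ^ 2).re ≤ ‖(a - b) ^ 2 * (Hstar l) ^ 2‖ :=
            Complex.re_le_norm _
        _ = ‖a - b‖ ^ 2 * ‖Hstar l‖ ^ 2 := by rw [norm_mul, norm_pow, norm_pow]
        _ = (2 - 2 * Real.cos ((τ₁ - τ₂) * l)) * ‖Hstar l‖ ^ 2 := by rw [hab]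
    have hre1 : ((2 - 2 * Complex.exp (Complex.I * ((τ₁:ℂ) - τ₂) * l)) *
        ((‖Hstar l‖ : ℂ) ^ 2)).re = (2 - 2 * Real.cos ((τ₁ - τ₂) * l)) * ‖Hstar l‖ ^ 2 := by
      rw [show ((‖Hstar l‖ : ℂ) ^ 2) = ((‖Hstar l‖ ^ 2 : ℝ) : ℂ) by push_cast; ring,
        mul_comm, Complex.re_ofReal_mul]
      simp [hEre]
      ring
    rw [hA, Complex.add_re, hre1]
    have := hre2
    nlinarith [hsin]
  -- integrability of real parts and of the bound
  have hreint : Integrable (fun l => (G τ₁ τ₁ l - 2 * G τ₁ τ₂ l + G τ₂ τ₂ l).re)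
      (volume : Measure ℝ) := by
    have := Complex.reCLM.integrable_comp hcomb
    simpa using this
  have hsm : AEStronglyMeasurable (fun l => Real.sin ((τ₂ - τ₁) * l / 2) ^ 2)
      (volume : Measure ℝ) := by
    exact ((Real.continuous_sin.comp (by continuity)).pow 2).aestronglyMeasurable
  have hprod : Integrable (fun l => ‖Hstar l‖ ^ 2 * Real.sin ((τ₂ - τ₁) * l / 2) ^ 2)
      (volume : Measure ℝ) := by
    refine hfint.mono' (hfm.mul hsm) (ae_of_all _ fun l => ?_)
    have h1 : Real.sin ((τ₂ - τ₁) * l / 2) ^ 2 ≤ 1 := Real.sin_sq_le_one _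
    have h0 : (0:ℝ) ≤ ‖Hstar l‖ ^ 2 := by positivity
    rw [Real.norm_eq_abs, abs_of_nonneg (by positivity)]
    nlinarith [sq_nonneg (Real.sin ((τ₂ - τ₁) * l / 2))]
  have hbint : Integrable (fun l => 8 * (‖Hstar l‖ ^ 2 * Real.sin ((τ₂ - τ₁) * l / 2) ^ 2))
      (volume : Measure ℝ) := hprod.const_mul 8
  -- main chain
  have hmono : ∫ l, (G τ₁ τ₁ l - 2 * G τ₁ τ₂ l + G τ₂ τ₂ l).re ≤
      ∫ l, 8 * (‖Hstar l‖ ^ 2 * Real.sin ((τ₂ - τ₁) * l / 2) ^ 2) :=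
    integral_mono hreint hbint hpt
  have hre_eq : ∫ l, (G τ₁ τ₁ l - 2 * G τ₁ τ₂ l + G τ₂ τ₂ l).re =
      (∫ l, (G τ₁ τ₁ l - 2 * G τ₁ τ₂ l + G τ₂ τ₂ l)).re := by
    have := integral_re (μ := (volume : Measure ℝ)) (𝕜 := ℂ) hcomb
    simpa using this
  have hLHS : Cinf τ₁ τ₁ - 2 * Cinf τ₁ τ₂ + Cinf τ₂ τ₂ =
      (1 / (2 * Real.pi)) * (∫ l, (G τ₁ τ₁ l - 2 * G τ₁ τ₂ l + G τ₂ τ₂ l)).re := by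
    rw [hC τ₁ τ₁, hC τ₁ τ₂, hC τ₂ τ₂, hsplit]
    simp only [hGdef, Complex.add_re, Complex.sub_re, Complex.mul_re, Complex.re_ofNat,
      Complex.im_ofNat, zero_mul, mul_zero, sub_zero]
    ring
  rw [hLHS]
  have h8 : ∫ l, 8 * (‖Hstar l‖ ^ 2 * Real.sin ((τ₂ - τ₁) * l / 2) ^ 2) =
      8 * ∫ l, ‖Hstar l‖ ^ 2 * Real.sin ((τ₂ - τ₁) * l / 2) ^ 2 := integral_const_mul 8 _
  have hmain : (∫ l, (G τ₁ τ₁ l - 2 * G τ₁ τ₂ l + G τ₂ τ₂ l)).re ≤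
      8 * ∫ l, ‖Hstar l‖ ^ 2 * Real.sin ((τ₂ - τ₁) * l / 2) ^ 2 := by
    rw [← hre_eq, ← h8]
    exact hmono
  calc (1 / (2 * Real.pi)) * (∫ l, (G τ₁ τ₁ l - 2 * G τ₁ τ₂ l + G τ₂ τ₂ l)).re ≤
      (1 / (2 * Real.pi)) * (8 * ∫ l, ‖Hstar l‖ ^ 2 * Real.sin ((τ₂ - τ₁) * l / 2) ^ 2) :=
        mul_le_mul_of_nonneg_left hmain (by positivity)
    _ = (4 / Real.pi) * ∫ l, ‖Hstar l‖ ^ 2 * Real.sin ((τ₂ - τ₁) * l / 2) ^ 2 := by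
        field_simp
        ring
end
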